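/- Let K be a nonarchimedean local field, A = M_n(K) the matrix algebra, and L ⊆ A a maximal subfield (a field extension of K of degree n embedded in A). Let H ⊆ L be an O_K-order of maximal rank in L (i.e., H spans L over K). Then the set of O_K-lattices in K^n that are stable under H is partitioned into finitely many orbits under the scaling action of K*. -/

import Mathlib

/-- A nonarchimedean local field: a nontrivially normed field whose norm is
nonarchimedean and which is locally compact. -/
class NonarchLocalField (K : Type*) extends NontriviallyNormedField K where
  isNonarchimedean : IsNonarchimedean (norm : K → ℝ)
  locallyCompact : LocallyCompactSpace K

/-- `s` is a full `O`-lattice in the finite-dimensional `K`-algebra (or vector space) `A`: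
it is contained in a finitely generated `O`-submodule and spans `A` over `K`. -/
def IsFullLattice (K : Type*) [Field K] {A : Type*} [Ring A] [Algebra K A]
    (O : Subring K) (s : Set A) : Prop :=
  letI : Algebra O A := ((algebraMap K A).comp O.subtype).toAlgebra' (fun c x => Algebra.commutes (c : K) x)
  (∃ t : Finset A, s ⊆ (Submodule.span O (t : Set A) : Set A)) ∧
    Submodule.span K s = ⊤

/-- An `O`-order of maximal rank in `A`: a subring which is a full `O`-lattice
and is stable under multiplication by `O`. -/
def IsOrder (K : Type*) [Field K] {A : Type*} [Ring A] [Algebra K A]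
    (O : Subring K) (D : Subring A) : Prop :=
  IsFullLattice K O (D : Set A) ∧ ∀ c ∈ O, ∀ x ∈ D, algebraMap K A c * x ∈ D

/-- A maximal `O`-order in `A`. -/
def IsMaximalOrder (K : Type*) [Field K] {A : Type*} [Ring A] [Algebra K A]
    (O : Subring K) (D : Subring A) : Prop :=
  IsOrder K O D ∧ ∀ D' : Subring A, IsOrder K O D' → D ≤ D' → D = D'

/-- Let `K` be a nonarchimedean local field with ring of integers `O`, and `L/K` a
finite field extension (a maximal subfield of the matrix algebra `M_n(K) ≅ End_K(L)`,
acting on `K^n ≅ L` by multiplication). Let `H ⊆ L` be an `O`-order of maximal rank.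
Then the full `O`-lattices in `L` stable under `H` fall into finitely many orbits
under the scaling action of `K*`. -/
theorem finitely_many_scaling_orbits_of_stable_lattices
    (K : Type*) [NonarchLocalField K] (O : Subring K) (hO : ∀ x : K, x ∈ O ↔ ‖x‖ ≤ 1)
    (L : Type*) [Field L] [Algebra K L] [FiniteDimensional K L]
    (H : Subring L) (hH : IsOrder K O H) :
    ∃ S : Finset (AddSubgroup L),
      ∀ Λ : AddSubgroup L,
        IsFullLattice K O (Λ : Set L) →
        (∀ c ∈ O, ∀ x ∈ Λ, algebraMap K L c * x ∈ Λ) →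
        (∀ h ∈ H, ∀ x ∈ Λ, h * x ∈ Λ) →
        ∃ Λ₀ ∈ S, ∃ k : Kˣ,
          (Λ : Set L) = (fun y => algebraMap K L (k : K) * y) '' (Λ₀ : Set L) := by
  classical
  haveI : LocallyCompactSpace K := NonarchLocalField.locallyCompact
  haveI : ProperSpace K := ProperSpace.of_locallyCompactSpace K
  haveI : CompleteSpace K := by infer_instance
  letI : Algebra O L := ((algebraMap K L).comp O.subtype).toAlgebra'
    (fun c x => Algebra.commutes (c : K) x)
  have hHfull : (∃ t : Finset L, (H : Set L) ⊆ (Submodule.span O (t : Set L) : Set L)) ∧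
      Submodule.span K (H : Set L) = ⊤ := hH.1
  obtain ⟨⟨tH, htH⟩, hHspan⟩ := hHfull
  have hHO := hH.2
  -- uniformizer
  obtain ⟨cK, hcK⟩ := NormedField.exists_one_lt_norm K
  have hcK0 : cK ≠ 0 := by
    intro h; rw [h, norm_zero] at hcK; linarith
  set π : K := cK⁻¹ with hπdef
  have hπ0 : π ≠ 0 := inv_ne_zero hcK0
  have hπpos : 0 < ‖π‖ := norm_pos_iff.mpr hπ0
  have hπlt : ‖π‖ < 1 := by
    rw [hπdef, norm_inv]
    rw [inv_lt_one_iff₀]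
    right; exact hcK
  have hπO : π ∈ O := (hO π).mpr hπlt.le
  have hπpowO : ∀ k : ℕ, π ^ k ∈ O := fun k => pow_mem hπO k
  -- O is compact
  have hOball : (O : Set K) = Metric.closedBall 0 1 := by
    ext x; simp [hO x, mem_closedBall_zero_iff]
  have hOcomp : IsCompact (O : Set K) := by rw [hOball]; exact isCompact_closedBall 0 1
  have hspan_repr : ∀ (t : Finset L) (x : L), x ∈ Submodule.span O (t : Set L) →
      ∃ fc : L → O, x = ∑ i ∈ t, algebraMap K L (fc i : K) * i := by
    intro t x hx
    obtain ⟨fc, hfc⟩ := Submodule.mem_span_finset.mp hx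
    exact ⟨fc, by rw [← hfc.2]; exact Finset.sum_congr rfl fun i _ => Algebra.smul_def _ _⟩
  -- basis of L inside H
  obtain ⟨bset, hbsub, hbspan, hbli⟩ := exists_linearIndependent K (H : Set L)
  rw [hHspan] at hbspan
  have hbfin : bset.Finite := hbli.finite
  haveI := hbfin.fintype
  let b : Module.Basis bset K L := Module.Basis.mk hbli (by rw [Subtype.range_coe, hbspan])
  have hb_eq : ∀ i : bset, b i = (i : L) := fun i => Module.Basis.mk_apply _ _ i
  let e : L ≃ₗ[K] (bset → K) := b.equivFun
  -- the image of H in coordinates, as a subgroup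
  let GH : AddSubgroup (bset → K) :=
    AddSubgroup.map e.toLinearMap.toAddMonoidHom H.toAddSubgroup
  have hGH : (GH : Set (bset → K)) = ⇑e '' (H : Set L) := by
    simp [GH, AddSubgroup.coe_map]
  set eH : Set (bset → K) := ⇑e '' (H : Set L) with heHdef
  have hmemH : ∀ x : L, e x ∈ eH ↔ x ∈ H := by
    intro x
    constructor
    · rintro ⟨y, hy, hxy⟩; rwa [← e.injective hxy]
    · exact fun h => ⟨x, h, rfl⟩
  -- the open polydisc is inside eH
  have hPsub : ∀ v : bset → K, (∀ i, ‖v i‖ < 1) → v ∈ eH := by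
    intro v hv
    refine ⟨e.symm v, ?_, e.apply_symm_apply v⟩
    have hsymm : e.symm v = ∑ i, v i • (i : L) := by
      rw [show e.symm = b.equivFun.symm from rfl, Module.Basis.equivFun_symm_apply]
      exact Finset.sum_congr rfl fun i _ => by rw [hb_eq]
    rw [hsymm]
    refine sum_mem fun i _ => ?_
    rw [Algebra.smul_def]
    exact hHO _ ((hO _).mpr (hv i).le) _ (hbsub i.2)
  have heHopen : IsOpen eH := by
    rw [← hGH]
    apply AddSubgroup.isOpen_of_mem_nhds (g := 0)
    have hball : IsOpen (Set.pi Set.univ fun _ : bset => Metric.ball (0:K) 1) :=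
      isOpen_set_pi Set.finite_univ fun _ _ => Metric.isOpen_ball
    refine Filter.mem_of_superset (hball.mem_nhds ?_) ?_
    · intro i _; simp
    · intro v hv
      have hv' : v ∈ eH := hPsub v fun i => by simpa using hv i (Set.mem_univ i)
      rw [← hGH] at hv'
      exact hv'
  have heHclosed : IsClosed eH := by
    rw [← hGH]; exact GH.isClosed_of_isOpen (by rw [hGH]; exact heHopen)
  -- eH is compact
  let T : (↥tH → K) →ₗ[K] L := Fintype.linearCombination K fun i : ↥tH => (i : L)
  have hTcont : Continuous fun c : ↥tH → K => e (T c) :=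
    (e.toLinearMap.comp T).continuous_of_finiteDimensional
  have hDom : IsCompact (Set.pi Set.univ fun _ : ↥tH => (O : Set K)) :=
    isCompact_univ_pi fun _ => hOcomp
  have heHsub : eH ⊆ (fun c => e (T c)) '' (Set.pi Set.univ fun _ : ↥tH => (O : Set K)) := by
    rintro _ ⟨x, hx, rfl⟩
    obtain ⟨fc, hfc⟩ := hspan_repr tH x (htH hx)
    refine ⟨fun i => (fc (i : L) : K), fun i _ => SetLike.coe_mem _, ?_⟩
    have : T (fun i => (fc (i : L) : K)) = x := by
      rw [Fintype.linearCombination_apply, hfc]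
      rw [← Finset.sum_coe_sort tH fun i => algebraMap K L (fc i : K) * i]
      exact Finset.sum_congr rfl fun i _ => Algebra.smul_def _ _
    exact congrArg e this
  have heHcomp : IsCompact eH :=
    (hDom.image hTcont).of_isClosed_subset heHclosed heHsub
  -- eH is bounded
  obtain ⟨R, hRcb⟩ := heHcomp.isBounded.subset_closedBall 0
  have hR : ∀ v ∈ eH, ‖v‖ ≤ R := fun v hv => by
    simpa [mem_closedBall_zero_iff] using hRcb hv
  -- absorption: every element of L can be scaled into H
  have habs : ∀ z : L, ∃ k : ℕ, algebraMap K L (π ^ k) * z ∈ H := by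
    intro z
    have hcoord : ∀ i : bset, ∃ k : ℕ, ∀ k' : ℕ, k ≤ k' → ‖π ^ k' * e z i‖ < 1 := by
      intro i
      rcases eq_or_ne (e z i) 0 with h | h
      · exact ⟨0, fun k' _ => by simp [h]⟩
      · have hpos0 : (0:ℝ) < ‖e z i‖ := norm_pos_iff.mpr h
        have hpos : (0:ℝ) < ‖e z i‖⁻¹ := inv_pos.mpr hpos0
        obtain ⟨k, hk⟩ := exists_pow_lt_of_lt_one hpos hπlt
        refine ⟨k, fun k' hk' => ?_⟩
        have h1 : ‖π‖ ^ k' ≤ ‖π‖ ^ k :=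
          pow_le_pow_of_le_one hπpos.le hπlt.le hk'
        rw [norm_mul, norm_pow]
        calc ‖π‖ ^ k' * ‖e z i‖ ≤ ‖π‖ ^ k * ‖e z i‖ := by
              apply mul_le_mul_of_nonneg_right h1 (norm_nonneg _)
          _ < ‖e z i‖⁻¹ * ‖e z i‖ := by
              apply mul_lt_mul_of_pos_right hk hpos0
          _ = 1 := inv_mul_cancel₀ (ne_of_gt hpos0)
    choose kk hkk using hcoord
    refine ⟨Finset.univ.sup kk, ?_⟩
    have hE : e (algebraMap K L (π ^ Finset.univ.sup kk) * z) =
        fun i => π ^ Finset.univ.sup kk * e z i := by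
      rw [← Algebra.smul_def, map_smul]
      rfl
    have : e (algebraMap K L (π ^ Finset.univ.sup kk) * z) ∈ eH := by
      rw [hE]
      exact hPsub _ fun i => hkk i _ (Finset.le_sup (Finset.mem_univ i))
    exact (hmemH _).mp this
  -- the compact set C of coordinates of H \ πH
  set Wl : Set L := (fun y => algebraMap K L π * y) '' (H : Set L) with hWldef
  have himg : ∀ c : K, ⇑e '' ((fun y => algebraMap K L c * y) '' (H : Set L)) =
      (fun v => c • v) '' eH := by
    intro c
    rw [heHdef, Set.image_image, Set.image_image]
    exact Set.image_congr fun x _ => by rw [← Algebra.smul_def, map_smul]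
  have heWlopen : IsOpen (⇑e '' Wl) := by
    rw [hWldef, himg]
    exact (Homeomorph.smulOfNeZero π hπ0).isOpenMap _ heHopen
  set C : Set (bset → K) := eH \ (⇑e '' Wl) with hCdef
  have hCcomp : IsCompact C := heHcomp.diff heWlopen
  have hC0 : ∀ v ∈ C, e.symm v ≠ 0 := by
    rintro v ⟨hv1, hv2⟩ h0
    apply hv2
    have hv0 : v = 0 := by rw [← e.apply_symm_apply v, h0, map_zero]
    rw [hv0]
    exact ⟨0, ⟨0, H.zero_mem, by simp⟩, map_zero _⟩
  -- inversion is continuous on C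
  set Mv : (bset → K) → Matrix bset bset K :=
    fun v => Algebra.leftMulMatrix b (e.symm v) with hMvdef
  have hMvcont : Continuous Mv := by
    have : Mv = ⇑((Algebra.leftMulMatrix b).toLinearMap.comp e.symm.toLinearMap) := rfl
    rw [this]
    exact LinearMap.continuous_of_finiteDimensional _
  have hdet : ∀ v ∈ C, (Mv v).det ≠ 0 := by
    intro v hv
    rw [hMvdef, ← Algebra.norm_eq_matrix_det b]
    exact (Algebra.norm_ne_zero_iff_of_basis b).mpr (hC0 v hv)
  set f : (bset → K) → (bset → K) :=
    fun v => ((Mv v).det)⁻¹ • ((Mv v).adjugate.mulVec (e 1)) with hfdef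
  have hfcont : ContinuousOn f C := by
    apply ContinuousOn.fun_smul
    · exact (hMvcont.matrix_det.continuousOn).inv₀ hdet
    · exact (hMvcont.matrix_adjugate.matrix_mulVec continuous_const).continuousOn
  have hfval : ∀ v ∈ C, f v = e ((e.symm v)⁻¹) := by
    intro v hv
    have hy : e.symm v ≠ 0 := hC0 v hv
    have h1 : (Mv v).mulVec (e ((e.symm v)⁻¹)) = e 1 := by
      have h2 := Algebra.leftMulMatrix_mulVec_repr b (e.symm v) ((e.symm v)⁻¹)
      rw [mul_inv_cancel₀ hy] at h2
      have h3 : ∀ z : L, e z = ⇑(b.repr z) := fun z => by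
        ext i; rw [show e z = b.equivFun z from rfl, Module.Basis.equivFun_apply]
      rw [h3, h3, hMvdef]
      exact h2
    have h4 : (Mv v).adjugate.mulVec (e 1) = (Mv v).det • e ((e.symm v)⁻¹) := by
      rw [← h1, Matrix.mulVec_mulVec, Matrix.adjugate_mul, Matrix.smul_mulVec,
        Matrix.one_mulVec]
    rw [hfdef]
    simp only []
    rw [h4, inv_smul_smul₀ (hdet v hv)]
  have hDcomp : IsCompact (f '' C) := hCcomp.image_of_continuousOn hfcont
  -- nested open cover
  set Wk : ℕ → Set (bset → K) := fun k => (fun v => (π ^ k) • v) ⁻¹' eH with hWkdef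
  have hWkopen : ∀ k, IsOpen (Wk k) := fun k => heHopen.preimage (continuous_const_smul _)
  have hWkmem : ∀ (k : ℕ) (z : L), e z ∈ Wk k ↔ algebraMap K L (π ^ k) * z ∈ H := by
    intro k z
    rw [hWkdef]
    have : (π ^ k) • e z = e (algebraMap K L (π ^ k) * z) := by
      rw [← Algebra.smul_def, map_smul]
    simp only [Set.mem_preimage]
    rw [this, hmemH]
  have hWkmono : Monotone Wk := by
    apply monotone_nat_of_le_succ
    intro k v hv
    obtain ⟨x, hx, hex⟩ := hv
    have hex' : e x = π ^ k • v := hex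
    have : (π ^ (k+1)) • v = e (algebraMap K L π * x) := by
      rw [pow_succ', mul_smul, ← hex', ← map_smul, ← Algebra.smul_def]
    rw [hWkdef, Set.mem_preimage, this]
    exact (hmemH _).mpr (hHO _ hπO _ hx)
  have hcover : f '' C ⊆ ⋃ k, Wk k := by
    rintro _ ⟨v, hv, rfl⟩
    rw [hfval v hv]
    obtain ⟨k, hk⟩ := habs ((e.symm v)⁻¹)
    exact Set.mem_iUnion.mpr ⟨k, (hWkmem k _).mpr hk⟩
  obtain ⟨sN, hsN⟩ := hDcomp.elim_finite_subcover Wk hWkopen hcover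
  set N : ℕ := sN.sup id with hNdef
  have hN : ∀ y : L, y ∈ H → y ∉ Wl → algebraMap K L (π ^ N) * y⁻¹ ∈ H := by
    intro y hy hyW
    have hvC : e y ∈ C := by
      refine ⟨(hmemH y).mpr hy, ?_⟩
      rintro ⟨w, hw, hew⟩
      exact hyW (e.injective hew ▸ hw)
    have hD : f (e y) ∈ ⋃ k ∈ sN, Wk k := hsN ⟨e y, hvC, rfl⟩
    rw [Set.mem_iUnion₂] at hD
    obtain ⟨k, hks, hk⟩ := hD
    have hkN : k ≤ N := Finset.le_sup (f := id) hks
    have hfN : f (e y) ∈ Wk N := hWkmono hkN hk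
    rw [hfval _ hvC, e.symm_apply_apply] at hfN
    exact (hWkmem N _).mp hfN
  -- the finite family of subgroups
  set WN : Set L := (fun y => algebraMap K L (π ^ N) * y) '' (H : Set L) with hWNdef
  set cS : Set (AddSubgroup L) := {X | WN ⊆ (X : Set L) ∧ (X : Set L) ⊆ (H : Set L)} with hcSdef
  have heWNopen : IsOpen (⇑e '' WN) := by
    rw [hWNdef, himg]
    exact (Homeomorph.smulOfNeZero (π ^ N) (pow_ne_zero _ hπ0)).isOpenMap _ heHopen
  have hWN0 : (0:L) ∈ WN := ⟨0, H.zero_mem, by simp⟩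
  have hcov2 : eH ⊆ ⋃ w : bset → K, (fun v => w + v) '' (⇑e '' WN) := by
    intro v hv
    exact Set.mem_iUnion.mpr ⟨v, e 0, ⟨0, hWN0, rfl⟩, by simp⟩
  have hUopen : ∀ w : bset → K, IsOpen ((fun v => w + v) '' (⇑e '' WN)) := fun w =>
    (Homeomorph.addLeft w).isOpenMap _ heWNopen
  obtain ⟨t2, ht2⟩ := heHcomp.elim_finite_subcover
    (fun w => (fun v => w + v) '' (⇑e '' WN)) hUopen hcov2
  set F : Finset L := t2.image (⇑e.symm) with hFdef
  have hcosets : ∀ x ∈ H, ∃ y ∈ F, ∃ ω ∈ WN, x = y + ω := by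
    intro x hx
    have hx2 := ht2 ((hmemH x).mpr hx)
    rw [Set.mem_iUnion₂] at hx2
    obtain ⟨w, hws, hmem⟩ := hx2
    obtain ⟨_, ⟨ω, hω, rfl⟩, hsum⟩ := hmem
    refine ⟨e.symm w, Finset.mem_image_of_mem _ hws, ω, hω, ?_⟩
    apply e.injective
    rw [map_add, e.apply_symm_apply, ← hsum]
  have hkey : ∀ X ∈ cS, ∀ X' ∈ cS,
      F.filter (fun y => y ∈ X) = F.filter (fun y => y ∈ X') → (X : Set L) ⊆ (X' : Set L) := by
    intro X hX X' hX' hflt x hx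
    obtain ⟨y, hyF, ω, hω, rfl⟩ := hcosets x (hX.2 hx)
    have hωX : ω ∈ X := hX.1 hω
    have hyX : y ∈ X := by
      have := X.sub_mem hx hωX
      simpa using this
    have hyX' : y ∈ X' := by
      have h5 : y ∈ F.filter (fun y => y ∈ X') := by
        rw [← hflt]; exact Finset.mem_filter.mpr ⟨hyF, hyX⟩
      exact (Finset.mem_filter.mp h5).2
    exact X'.add_mem hyX' (hX'.1 hω)
  have hcSfin : cS.Finite := by
    have hinj : Set.InjOn (fun X : AddSubgroup L => F.filter (fun y => y ∈ X)) cS := by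
      intro X hX X' hX' hXX'
      exact SetLike.ext' (Set.Subset.antisymm (hkey X hX X' hX' hXX') (hkey X' hX' X hX hXX'.symm))
    refine Set.Finite.of_finite_image ?_ hinj
    refine Set.Finite.subset (F.powerset.finite_toSet) ?_
    rintro _ ⟨X, _, rfl⟩
    simp only [Finset.coe_powerset, Set.mem_preimage, Set.mem_powerset_iff, Finset.coe_subset]
    exact Finset.filter_subset _ _
  refine ⟨hcSfin.toFinset, ?_⟩
  -- now handle an arbitrary stable lattice
  intro Λ hfull hOst hHst
  have hfull' : (∃ t : Finset L, (Λ : Set L) ⊆ (Submodule.span O (t : Set L) : Set L)) ∧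
      Submodule.span K (Λ : Set L) = ⊤ := hfull
  obtain ⟨⟨tΛ, htΛ⟩, hΛspan⟩ := hfull'
  -- a nonzero element of Λ
  have hx0 : ∃ x ∈ Λ, x ≠ (0:L) := by
    by_contra h
    push_neg at h
    have hsub : (Λ : Set L) ⊆ ({0} : Set L) := fun x hx => h x hx
    have hle : Submodule.span K (Λ : Set L) ≤ (⊥ : Submodule K L) := by
      rw [← Submodule.span_empty (R := K) (M := L)]
      calc Submodule.span K (Λ : Set L) ≤ Submodule.span K ({0} : Set L) :=
            Submodule.span_mono hsub
        _ = ⊥ := Submodule.span_zero_singleton K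
        _ = Submodule.span K (∅ : Set L) := (Submodule.span_empty).symm
    rw [hΛspan] at hle
    have : (1:L) ∈ (⊥ : Submodule K L) := hle Submodule.mem_top
    rw [Submodule.mem_bot] at this
    exact one_ne_zero this
  obtain ⟨x₀, hx₀Λ, hx₀⟩ := hx0
  -- scaling by powers of π
  set σ : ℤ → L := fun k => algebraMap K L (π ^ k) with hσdef
  have halginj : Function.Injective (algebraMap K L) := (algebraMap K L).injective
  have hσne : ∀ k : ℤ, σ k ≠ 0 := by
    intro k h
    have : (π ^ k : K) = 0 := by
      apply halginj; rw [map_zero]; exact h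
    exact zpow_ne_zero k hπ0 this
  have hσadd : ∀ j k : ℤ, σ (j + k) = σ j * σ k := by
    intro j k
    rw [hσdef]
    simp only []
    rw [zpow_add₀ hπ0, map_mul]
  -- Λ can be scaled into H
  have hup : ∃ a : ℕ, ∀ x ∈ Λ, σ (a : ℤ) * x ∈ H := by
    have hgen : ∀ i : ↥tΛ, ∃ k : ℕ, algebraMap K L (π ^ k) * (i : L) ∈ H :=
      fun i => habs i
    choose kk hkk using hgen
    refine ⟨Finset.univ.sup kk, ?_⟩
    intro x hx
    obtain ⟨fc, hfc⟩ := hspan_repr tΛ x (htΛ hx)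
    rw [hfc, Finset.mul_sum]
    refine sum_mem fun i hi => ?_
    set k : ℕ := kk ⟨i, hi⟩ with hkdef
    have hk_le : k ≤ Finset.univ.sup kk := Finset.le_sup (Finset.mem_univ _)
    have hsplit : (π : K) ^ (Finset.univ.sup kk) = π ^ (Finset.univ.sup kk - k) * π ^ k := by
      rw [← pow_add, Nat.sub_add_cancel hk_le]
    have hterm : σ ((Finset.univ.sup kk : ℕ) : ℤ) * (algebraMap K L (fc i : K) * i) =
        algebraMap K L ((fc i : K)) * (algebraMap K L (π ^ (Finset.univ.sup kk - k)) *
          (algebraMap K L (π ^ k) * i)) := by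
      show algebraMap K L (π ^ ((Finset.univ.sup kk : ℕ) : ℤ)) * (algebraMap K L (fc i : K) * i) = _
      rw [zpow_natCast]
      rw [← mul_assoc, ← map_mul, ← mul_assoc, ← map_mul, ← mul_assoc, ← map_mul]
      congr 1
      rw [hsplit]; ring
    rw [hterm]
    exact hHO _ (SetLike.coe_mem (fc i)) _ (hHO _ (hπpowO _) _ (hkk ⟨i, hi⟩))
  -- the scaling exponents are bounded below
  have hdown : ∃ bnd : ℤ, ∀ k : ℤ, (∀ x ∈ Λ, σ k * x ∈ H) → bnd ≤ k := by
    have hex₀ : (0:ℝ) < ‖e x₀‖ := by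
      rw [norm_pos_iff]
      intro h
      exact hx₀ (by simpa using e.injective (h.trans (map_zero e).symm))
    have hinv1 : (1:ℝ) < ‖π‖⁻¹ := by
      rw [one_lt_inv_iff₀]; exact ⟨hπpos, hπlt⟩
    obtain ⟨M, hM⟩ := pow_unbounded_of_one_lt (R / ‖e x₀‖) hinv1
    refine ⟨-(M : ℤ), fun k hk => ?_⟩
    by_contra hlt
    push_neg at hlt
    have h1 : σ k * x₀ ∈ H := hk x₀ hx₀Λ
    have h2 : ‖e (σ k * x₀)‖ ≤ R := hR _ ((hmemH _).mpr h1)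
    have h2' : ‖π‖ ^ k * ‖e x₀‖ ≤ R := by
      have : e (σ k * x₀) = (π ^ k) • e x₀ := by
        rw [hσdef]; simp only []; rw [← Algebra.smul_def, map_smul]
      rw [this, norm_smul, norm_zpow] at h2
      exact h2
    have h3 : (‖π‖:ℝ) ^ (-(M:ℤ)) ≤ ‖π‖ ^ k := by
      apply zpow_le_zpow_right_of_le_one₀ hπpos hπlt.le
      omega
    have h4 : R / ‖e x₀‖ < ‖π‖ ^ (-(M:ℤ)) := by
      rw [zpow_neg, ← inv_zpow, zpow_natCast]
      exact hM
    have h5 : ‖π‖ ^ k ≤ R / ‖e x₀‖ := (le_div_iff₀ hex₀).mpr h2'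
    linarith
  -- choose the minimal exponent
  obtain ⟨a, ha⟩ := hup
  obtain ⟨bnd, hbnd⟩ := hdown
  obtain ⟨m, hm, hmle⟩ := Int.exists_least_of_bdd
    (P := fun k : ℤ => ∀ x ∈ Λ, σ k * x ∈ H) ⟨bnd, fun z hz => hbnd z hz⟩ ⟨(a : ℤ), ha⟩
  have hm1 : ¬ ∀ x ∈ Λ, σ (m - 1) * x ∈ H := by
    intro h
    have := hmle _ h
    omega
  push_neg at hm1
  obtain ⟨x₁, hx₁Λ, hx₁⟩ := hm1
  have hx₁0 : x₁ ≠ 0 := by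
    intro h
    exact hx₁ (by rw [h, mul_zero]; exact H.zero_mem)
  set y : L := σ m * x₁ with hydef
  have hyH : y ∈ H := hm x₁ hx₁Λ
  have hy0 : y ≠ 0 := mul_ne_zero (hσne m) hx₁0
  have hyW : y ∉ Wl := by
    rintro ⟨h', hh', heq⟩
    apply hx₁
    have hπL : algebraMap K L π ≠ 0 := fun h =>
      hπ0 (halginj (by rw [h, map_zero]))
    have hσ1 : algebraMap K L π = σ 1 := by
      rw [hσdef]; simp only []; rw [zpow_one]
    have heq' : algebraMap K L π * h' = y := heq
    have h7 : algebraMap K L π * (σ (m - 1) * x₁) = y := by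
      rw [hσ1, ← mul_assoc, ← hσadd]
      norm_num [hydef]
    have h8 : σ (m - 1) * x₁ = h' := mul_left_cancel₀ hπL (h7.trans heq'.symm)
    rw [h8]
    exact hh'
  have hzN : algebraMap K L (π ^ N) * y⁻¹ ∈ H := hN y hyH hyW
  -- the scaled lattice
  set Λ₀ : AddSubgroup L := AddSubgroup.map (AddMonoidHom.mulLeft (σ m)) Λ with hΛ₀def
  have hΛ₀coe : (Λ₀ : Set L) = (fun x => σ m * x) '' (Λ : Set L) := by
    rw [hΛ₀def, AddSubgroup.coe_map, AddMonoidHom.coe_mulLeft]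
  have hΛ₀S : Λ₀ ∈ cS := by
    constructor
    · rintro _ ⟨h', hh', rfl⟩
      rw [hΛ₀coe]
      refine ⟨(h' * (algebraMap K L (π ^ N) * y⁻¹)) * x₁,
        hHst _ (H.mul_mem hh' hzN) _ hx₁Λ, ?_⟩
      show σ m * (h' * (algebraMap K L (π ^ N) * y⁻¹) * x₁) = algebraMap K L (π ^ N) * h'
      have h9 : σ m * (h' * (algebraMap K L (π ^ N) * y⁻¹) * x₁) =
          h' * (algebraMap K L (π ^ N) * (y⁻¹ * y)) := by
        rw [hydef]; ring
      rw [h9, inv_mul_cancel₀ hy0, mul_one]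
      ring
    · intro x hx
      have hx' : x ∈ (Λ₀ : Set L) := hx
      rw [hΛ₀coe] at hx'
      obtain ⟨z, hz, rfl⟩ := hx'
      exact hm z hz
  refine ⟨Λ₀, by rw [Set.Finite.mem_toFinset]; exact hΛ₀S, ?_⟩
  -- the unit and the final set equality
  refine ⟨(Units.mk0 π hπ0) ^ (-m), ?_⟩
  have hu : (((Units.mk0 π hπ0) ^ (-m) : Kˣ) : K) = π ^ (-m) :=
    Units.val_zpow_eq_zpow_val _ _
  rw [hu]
  have hcancel : ∀ x : L, algebraMap K L (π ^ (-m : ℤ)) * (σ m * x) = x := by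
    intro x
    have h6 : algebraMap K L (π ^ (-m : ℤ)) = σ (-m) := rfl
    have hσ0 : σ 0 = (1:L) := by rw [hσdef]; simp
    rw [h6, ← mul_assoc, ← hσadd, neg_add_cancel, hσ0, one_mul]
  rw [hΛ₀coe, Set.image_image]
  ext x
  constructor
  · intro hx
    exact ⟨x, hx, hcancel x⟩
  · rintro ⟨z, hz, rfl⟩
    show algebraMap K L (π ^ (-m : ℤ)) * (σ m * z) ∈ (Λ : Set L)
    rw [hcancel]
    exact hz
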